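/- Let α_1, …, α_k be irrational real numbers such that 1, α_1, …, α_k are linearly independent over ℚ, and let a' = (α_1, …, α_k) ∈ ℝ^k. Then for every ε > 0 there exist j ∈ ℕ and λ ∈ ℤ^k such that |(2j+1)·a' + λ| < ε; equivalently, some odd integer multiple of a' is ε-close to 0 modulo ℤ^k. -/

import Mathlib

open Set

noncomputable section

namespace Stmt17Aux
open Finset Real

def Complex.abs : AbsoluteValue ℂ ℝ where
  toFun z := ‖z‖
  map_mul' := norm_mul
  nonneg' := norm_nonneg
  eq_zero' _ := norm_eq_zero
  add_le' := norm_add_le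
lemma Complex.norm_eq_abs (z : ℂ) : ‖z‖ = Complex.abs z := rfl
lemma Complex.abs_apply (z : ℂ) : Complex.abs z = √(_root_.Complex.normSq z) :=
  _root_.Complex.norm_def z
lemma Complex.abs_exp_ofReal_mul_I (x : ℝ) :
    Complex.abs (Complex.exp (x * Complex.I)) = 1 := _root_.Complex.norm_exp_ofReal_mul_I x
lemma Complex.normSq_eq_abs (z : ℂ) : _root_.Complex.normSq z = Complex.abs z ^ 2 :=
  _root_.Complex.normSq_eq_norm_sq z
lemma Complex.abs_conj (z : ℂ) : Complex.abs ((starRingEnd ℂ) z) = Complex.abs z :=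
  _root_.Complex.norm_conj z
lemma Complex.abs_natCast (n : ℕ) : Complex.abs (n : ℂ) = n := _root_.Complex.norm_natCast n

noncomputable def ee (θ : ℝ) : ℂ := Complex.exp ((2 * π * θ : ℝ) * Complex.I)
lemma abs_ee (θ : ℝ) : Complex.abs (ee θ) = 1 := Complex.abs_exp_ofReal_mul_I _
lemma ee_add (a b : ℝ) : ee (a + b) = ee a * ee b := by
  rw [ee, ee, ee, ← Complex.exp_add]; congr 1; push_cast; ring
lemma ee_pow (θ : ℝ) (n : ℕ) : ee θ ^ n = ee (n * θ) := by
  rw [ee, ee, ← Complex.exp_nat_mul]; congr 1; push_cast; ring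
lemma ee_ne_zero (θ : ℝ) : ee θ ≠ 0 := Complex.exp_ne_zero _
lemma ee_sum {ι : Type*} (s : Finset ι) (f : ι → ℝ) :
    ee (∑ i ∈ s, f i) = ∏ i ∈ s, ee (f i) := by
  induction s using Finset.cons_induction with
  | empty => simp [ee]
  | cons a s ha ih => rw [Finset.sum_cons, Finset.prod_cons, ee_add, ih]
lemma ee_eq_ee {a b : ℝ} (h : ee a = ee b) : ∃ n : ℤ, a - b = n := by
  have h1 : ee (a - b) = 1 := by
    have := ee_add (a - b) b
    rw [sub_add_cancel, h] at this
    field_simp [ee_ne_zero b] at this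
    simpa using this.symm
  rw [ee, Complex.exp_eq_one_iff] at h1
  obtain ⟨n, hn⟩ := h1
  refine ⟨n, ?_⟩
  have h2 : ((2 * π * (a - b) : ℝ) : ℂ) = ((n : ℂ) * (2 * π)) := by
    refine mul_right_cancel₀ Complex.I_ne_zero ?_
    rw [hn]; ring
  have h3 : 2 * π * (a - b) = (n : ℝ) * (2 * π) := by exact_mod_cast h2
  have h2π : (2 * π : ℝ) ≠ 0 := by positivity
  exact mul_left_cancel₀ h2π (h3.trans (by ring))
lemma abs_one_add_ee (θ : ℝ) :
    Complex.abs (1 + ee θ) = Real.sqrt (2 + 2 * Real.cos (2 * π * θ)) := by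
  have hre : (1 + ee θ).re = 1 + Real.cos (2 * π * θ) := by
    rw [Complex.add_re, Complex.one_re, ee, Complex.exp_ofReal_mul_I_re]
  have him : (1 + ee θ).im = Real.sin (2 * π * θ) := by
    rw [Complex.add_im, Complex.one_im, ee, Complex.exp_ofReal_mul_I_im, zero_add]
  rw [Complex.abs_apply, Complex.normSq_apply, hre, him]
  congr 1
  nlinarith [Real.sin_sq_add_cos_sq (2 * π * θ)]

lemma abs_sub_le_add (x y : ℂ) :
    Complex.abs (x - y) ≤ Complex.abs x + Complex.abs y := by
  simpa [Complex.norm_eq_abs] using norm_sub_le x y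

lemma coeff_bound {ι : Type*} [DecidableEq ι] (S : Finset ι) (a z : ι → ℂ)
    (hz : ∀ m ∈ S, Complex.abs (z m) = 1) (hinj : Set.InjOn z S)
    {B : ℝ} (hB : ∀ t : ℕ, Complex.abs (∑ m ∈ S, a m * z m ^ t) ≤ B)
    {s : ι} (hs : s ∈ S) : Complex.abs (a s) ≤ B := by
  set cz := (starRingEnd ℂ) (z s) with hcz
  have hzs1 : z s * cz = 1 := by
    rw [hcz, Complex.mul_conj]
    norm_cast
    rw [Complex.normSq_eq_abs, hz s hs]; norm_num
  have habscz : Complex.abs cz = 1 := by rw [hcz, Complex.abs_conj, hz s hs]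
  set C := ∑ m ∈ S.erase s, Complex.abs (a m) * (2 / Complex.abs (z m - z s)) with hC
  have hC0 : 0 ≤ C := by
    refine Finset.sum_nonneg fun m _ => ?_
    positivity
  have key : ∀ N : ℕ, (N : ℝ) * Complex.abs (a s) ≤ N * B + C := by
    intro N
    have hW : ∀ m ∈ S.erase s, z m * cz ≠ 1 := by
      intro m hm hOne
      have hmS := Finset.mem_of_mem_erase hm
      have : z m = z s := by
        have := congrArg (· * z s) hOne
        simp only [one_mul] at this
        rw [mul_assoc, mul_comm cz (z s), hzs1, mul_one] at this
        exact this
      exact (Finset.ne_of_mem_erase hm) (hinj hmS hs this)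
    have hmain : a s * N =
        (∑ t ∈ range N, (∑ m ∈ S, a m * z m ^ t) * cz ^ t)
          - ∑ m ∈ S.erase s, a m * ((( z m * cz) ^ N - 1) / (z m * cz - 1)) := by
      have h1 : ∀ t ∈ range N, (∑ m ∈ S, a m * z m ^ t) * cz ^ t
          = ∑ m ∈ S, a m * (z m * cz) ^ t := by
        intro t _
        rw [Finset.sum_mul]
        exact Finset.sum_congr rfl fun m _ => by rw [mul_pow]; ring
      rw [Finset.sum_congr rfl h1, Finset.sum_comm]
      have h2 : ∀ m ∈ S, ∑ t ∈ range N, a m * (z m * cz) ^ t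
          = a m * ∑ t ∈ range N, (z m * cz) ^ t := by
        intro m _; rw [Finset.mul_sum]
      rw [Finset.sum_congr rfl h2, ← Finset.add_sum_erase _ _ hs, hzs1]
      have h3 : ∑ t ∈ range N, (1 : ℂ) ^ t = (N : ℂ) := by simp
      rw [h3]
      have h4 : ∀ m ∈ S.erase s, a m * ∑ t ∈ range N, (z m * cz) ^ t
          = a m * (((z m * cz) ^ N - 1) / (z m * cz - 1)) := by
        intro m hm
        rw [geom_sum_eq (hW m hm)]
      rw [Finset.sum_congr rfl h4]
      ring
    have habs := congrArg Complex.abs hmain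
    rw [map_mul, Complex.abs_natCast] at habs
    have hT : Complex.abs (∑ t ∈ range N, (∑ m ∈ S, a m * z m ^ t) * cz ^ t)
        ≤ N * B := by
      refine le_trans (AbsoluteValue.sum_le _ _ _) ?_
      have hb : ∀ t ∈ range N,
          Complex.abs ((∑ m ∈ S, a m * z m ^ t) * cz ^ t) ≤ B := by
        intro t _
        rw [map_mul, map_pow, habscz, one_pow, mul_one]
        exact hB t
      refine le_trans (Finset.sum_le_sum hb) ?_
      rw [Finset.sum_const, Finset.card_range, nsmul_eq_mul]
    have hR : Complex.abs (∑ m ∈ S.erase s,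
        a m * (((z m * cz) ^ N - 1) / (z m * cz - 1))) ≤ C := by
      refine le_trans (AbsoluteValue.sum_le _ _ _) ?_
      refine Finset.sum_le_sum fun m hm => ?_
      rw [map_mul]
      refine mul_le_mul_of_nonneg_left ?_ (AbsoluteValue.nonneg _ _)
      rw [map_div₀]
      have hzmzs : z m ≠ z s := by
        intro hEq
        exact (Finset.ne_of_mem_erase hm) (hinj (Finset.mem_of_mem_erase hm) hs hEq)
      have hdpos : 0 < Complex.abs (z m - z s) := by
        rw [AbsoluteValue.pos_iff]
        exact sub_ne_zero.mpr hzmzs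
      have hden : z m * cz - 1 = (z m - z s) * cz := by
        rw [sub_mul, hzs1]
      have hdenabs : Complex.abs (z m * cz - 1) = Complex.abs (z m - z s) := by
        rw [hden, map_mul, habscz, mul_one]
      have hnum : Complex.abs ((z m * cz) ^ N - 1) ≤ 2 := by
        refine le_trans (abs_sub_le_add _ _) ?_
        rw [map_pow, map_mul, hz m (Finset.mem_of_mem_erase hm), habscz, mul_one,
          one_pow, map_one]
        norm_num
      rw [hdenabs]
      gcongr
    have h5 : (N : ℝ) * Complex.abs (a s) ≤ Complex.abs
        (∑ t ∈ range N, (∑ m ∈ S, a m * z m ^ t) * cz ^ t) + Complex.abs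
        (∑ m ∈ S.erase s, a m * (((z m * cz) ^ N - 1) / (z m * cz - 1))) := by
      rw [mul_comm (N:ℝ), habs]
      exact abs_sub_le_add _ _
    calc (N : ℝ) * Complex.abs (a s)
        ≤ _ + _ := h5
      _ ≤ N * B + C := add_le_add hT hR
  by_contra hlt
  push_neg at hlt
  have hδ : 0 < Complex.abs (a s) - B := by linarith
  obtain ⟨N, hN⟩ := exists_nat_gt (C / (Complex.abs (a s) - B))
  have h1 := key N
  have h2 : C < N * (Complex.abs (a s) - B) := by
    rwa [div_lt_iff₀ hδ] at hN
  nlinarith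


lemma kron {k : ℕ} (β x : Fin k → ℝ)
    (hβ : ∀ (d : Fin k → ℤ), (∃ n : ℤ, ∑ i, (d i : ℝ) * β i = n) → ∀ i, d i = 0)
    {ε : ℝ} (hε : 0 < ε) (hε2 : ε ≤ 1/4) :
    ∃ t : ℕ, ∀ i, ∃ z : ℤ, |t * β i - x i - z| < ε := by
  by_contra hcon
  push_neg at hcon
  -- hcon : ∀ t, ∃ i, ∀ z, ε ≤ |↑t * β i - x i - ↑z|
  obtain ⟨i0, -⟩ := hcon 0
  have hk : 0 < k := i0.pos
  set c : ℝ := Real.sqrt (2 + 2 * Real.cos (2 * π * ε)) with hcdef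
  have hπ := Real.pi_pos
  have hcos1 : Real.cos (2 * π * ε) < 1 := by
    have h1 : 2 * π * ε < 2 * π := by nlinarith
    have h2 : 0 < 2 * π * ε := by positivity
    refine lt_of_le_of_ne (Real.cos_le_one _) fun h => ?_
    have := (Real.cos_eq_one_iff_of_lt_of_lt (by linarith) h1).mp h
    linarith
  have hcosm1 : -1 ≤ Real.cos (2 * π * ε) := Real.neg_one_le_cos _
  have hc0 : 0 ≤ c := Real.sqrt_nonneg _
  have hclt : c < 2 := by
    have : c < Real.sqrt 4 := Real.sqrt_lt_sqrt (by linarith) (by linarith)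
    have h4 : Real.sqrt 4 = 2 := by
      rw [show (4:ℝ) = 2^2 by norm_num, Real.sqrt_sq (by norm_num)]
    linarith [this, h4.symm.le]
  -- pointwise bound on |F t|
  set F : ℕ → ℂ := fun t => ∏ i, (1 + ee ((t : ℝ) * β i - x i)) with hFdef
  have hF : ∀ t : ℕ, Complex.abs (F t) ≤ c * 2 ^ (k - 1) := by
    intro t
    obtain ⟨i, hi⟩ := hcon t
    rw [hFdef]
    simp only
    rw [map_prod]
    have hb : ∀ j ∈ (univ : Finset (Fin k)),
        Complex.abs (1 + ee ((t : ℝ) * β j - x j)) ≤ if j = i then c else 2 := by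
      intro j _
      by_cases hji : j = i
      · subst hji
        rw [if_pos rfl, abs_one_add_ee]
        set θ := (t : ℝ) * β j - x j
        have h1 : ε ≤ |θ - round θ| := hi (round θ)
        have h2 : |θ - round θ| ≤ 1 / 2 := abs_sub_round θ
        have hcosle : Real.cos (2 * π * θ) ≤ Real.cos (2 * π * ε) := by
          have e1 : Real.cos (2 * π * θ)
              = Real.cos (2 * π * (θ - round θ) + (round θ) * (2 * π)) := by
            congr 1; push_cast; ring
          rw [e1, Real.cos_add_int_mul_two_pi]
          have e2 : Real.cos (2 * π * (θ - round θ))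
              = Real.cos (|2 * π * (θ - round θ)|) := (Real.cos_abs _).symm
          rw [e2, abs_mul, abs_of_pos (by positivity : (0:ℝ) < 2 * π)]
          refine Real.cos_le_cos_of_nonneg_of_le_pi (by positivity) ?_ ?_
          · nlinarith
          · nlinarith
        exact Real.sqrt_le_sqrt (by linarith)
      · rw [if_neg hji]
        calc Complex.abs (1 + ee ((t : ℝ) * β j - x j))
            ≤ Complex.abs 1 + Complex.abs (ee ((t : ℝ) * β j - x j)) :=
              Complex.abs.add_le _ _
          _ = 2 := by rw [map_one, abs_ee]; norm_num
    calc ∏ j, Complex.abs (1 + ee ((t : ℝ) * β j - x j))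
        ≤ ∏ j, (if j = i then c else 2) :=
          Finset.prod_le_prod (fun j _ => AbsoluteValue.nonneg _ _) hb
      _ = c * 2 ^ (k - 1) := by
          rw [← Finset.mul_prod_erase _ _ (mem_univ i), if_pos rfl]
          congr 1
          rw [Finset.prod_congr rfl (fun j hj => if_neg (Finset.ne_of_mem_erase hj)),
            Finset.prod_const, Finset.card_erase_of_mem (mem_univ i), card_univ,
            Fintype.card_fin]
  -- choose p
  set r : ℝ := c / 2 with hrdef
  have hr0 : 0 ≤ r := by positivity
  have hr1 : r < 1 := by rw [hrdef]; linarith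
  have htend := tendsto_pow_const_mul_const_pow_of_lt_one k hr0 hr1
  obtain ⟨p, hp2, hp1⟩ :=
    ((htend.eventually (gt_mem_nhds (by positivity : (0:ℝ) < (1/2)^k))).and
      (Filter.eventually_ge_atTop 1)).exists
  have hkey : ((p : ℝ) + 1) ^ k * r ^ p < 1 := by
    have hp1' : (1:ℝ) ≤ p := by exact_mod_cast hp1
    have h1 : ((p:ℝ)+1)^k ≤ (2*p)^k := by
      apply pow_le_pow_left₀ (by positivity)
      linarith
    have hrp : 0 ≤ r ^ p := by positivity
    calc ((p : ℝ) + 1) ^ k * r ^ p ≤ (2*(p:ℝ))^k * r^p := mul_le_mul_of_nonneg_right h1 hrp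
      _ = 2^k * ((p:ℝ)^k * r^p) := by rw [mul_pow]; ring
      _ < 2^k * ((1/2:ℝ)^k) := by exact mul_lt_mul_of_pos_left hp2 (by positivity)
      _ = 1 := by rw [← mul_pow]; norm_num
  -- the trigonometric polynomial expansion of F t ^ p
  set S : Finset (Fin k → ℕ) := Fintype.piFinset (fun _ => Finset.range (p+1)) with hS
  set zf : (Fin k → ℕ) → ℂ := fun m => ee (∑ i, (m i : ℝ) * β i) with hzf
  set af : (Fin k → ℕ) → ℂ :=
    fun m => (∏ i, (Nat.choose p (m i) : ℂ)) * ee (-∑ i, (m i : ℝ) * x i) with haf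
  have hexp : ∀ t : ℕ, ∑ m ∈ S, af m * zf m ^ t = F t ^ p := by
    intro t
    rw [hFdef]; simp only
    rw [← Finset.prod_pow]
    have hterm : ∀ i : Fin k, (1 + ee ((t:ℝ) * β i - x i)) ^ p
        = ∑ j ∈ Finset.range (p+1),
          (Nat.choose p j : ℂ) * ee ((t:ℝ) * β i - x i) ^ j := by
      intro i
      rw [add_comm (1:ℂ), add_pow]
      exact Finset.sum_congr rfl fun j hj => by rw [one_pow, mul_one, mul_comm]
    rw [Finset.prod_congr rfl (fun i _ => hterm i), Finset.prod_univ_sum]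
    refine (Finset.sum_congr rfl fun m hm => ?_).symm
    rw [Finset.prod_mul_distrib]
    rw [haf]; simp only
    rw [mul_assoc]
    congr 1
    have h1 : ∀ i : Fin k, ee ((t:ℝ) * β i - x i) ^ (m i)
        = ee ((m i : ℝ) * ((t:ℝ) * β i - x i)) := fun i => ee_pow _ _
    rw [Finset.prod_congr rfl (fun i _ => h1 i), ← ee_sum]
    rw [hzf]; simp only
    rw [ee_pow, ← ee_add]
    congr 1
    have h2 : ∀ i ∈ (univ : Finset (Fin k)), (m i : ℝ) * ((t:ℝ) * β i - x i)
        = -((m i : ℝ) * x i) + (t:ℝ) * ((m i : ℝ) * β i) := fun i _ => by ring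
    rw [Finset.sum_congr rfl h2, Finset.sum_add_distrib, Finset.sum_neg_distrib,
      ← Finset.mul_sum]
  have hzabs : ∀ m ∈ S, Complex.abs (zf m) = 1 := fun m _ => abs_ee _
  have hinjS : Set.InjOn zf S := by
    intro m hm m' hm' hEq
    obtain ⟨n, hn⟩ := ee_eq_ee hEq
    have hsum : ∑ i, (((m i : ℤ) - (m' i : ℤ) : ℤ) : ℝ) * β i = (n : ℝ) := by
      push_cast
      have h3 : ∀ i ∈ (univ : Finset (Fin k)), ((m i : ℝ) - (m' i : ℝ)) * β i
          = (m i : ℝ) * β i - (m' i : ℝ) * β i := fun i _ => by ring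
      rw [Finset.sum_congr rfl h3, Finset.sum_sub_distrib]
      exact hn
    have hd := hβ (fun i => (m i : ℤ) - m' i) ⟨n, hsum⟩
    funext i
    have h5 : (m i : ℤ) - m' i = 0 := hd i
    omega
  have hsmem : (fun _ : Fin k => p / 2) ∈ S := by
    rw [hS, Fintype.mem_piFinset]
    intro i; rw [Finset.mem_range]; omega
  have hBbound : ∀ t : ℕ, Complex.abs (∑ m ∈ S, af m * zf m ^ t) ≤ (c * 2 ^ (k-1)) ^ p := by
    intro t
    rw [hexp t, map_pow]
    exact pow_le_pow_left₀ (AbsoluteValue.nonneg _ _) (hF t) p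
  have hcoef := coeff_bound S af zf hzabs hinjS hBbound hsmem
  have habsaf : Complex.abs (af (fun _ => p / 2)) = (Nat.choose p (p/2) : ℝ) ^ k := by
    rw [haf]; simp only
    rw [map_mul, abs_ee, mul_one, map_prod]
    rw [Finset.prod_congr rfl (fun i _ => Complex.abs_natCast _),
      Finset.prod_const, card_univ, Fintype.card_fin]
  rw [habsaf] at hcoef
  have hcb : (2:ℝ) ^ p ≤ ((p:ℝ) + 1) * (Nat.choose p (p/2) : ℝ) := by
    have h1 : (2:ℕ) ^ p = ∑ j ∈ Finset.range (p+1), Nat.choose p j :=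
      (Nat.sum_range_choose p).symm
    have h2 : ∑ j ∈ Finset.range (p+1), Nat.choose p j ≤ (p+1) * Nat.choose p (p/2) := by
      calc ∑ j ∈ Finset.range (p+1), Nat.choose p j
          ≤ ∑ _j ∈ Finset.range (p+1), Nat.choose p (p/2) :=
            Finset.sum_le_sum fun j _ => Nat.choose_le_middle j p
        _ = (p+1) * Nat.choose p (p/2) := by
            rw [Finset.sum_const, Finset.card_range, smul_eq_mul]
    have h3 : (2:ℕ)^p ≤ (p+1) * Nat.choose p (p/2) := h1 ▸ h2
    exact_mod_cast h3
  set M : ℝ := (Nat.choose p (p/2) : ℝ) with hM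
  have hM0 : 0 ≤ M := by positivity
  have hstep1 : ((2:ℝ)^p)^k ≤ ((p:ℝ)+1)^k * M^k := by
    calc ((2:ℝ)^p)^k ≤ (((p:ℝ)+1) * M)^k := pow_le_pow_left₀ (by positivity) hcb k
      _ = ((p:ℝ)+1)^k * M^k := mul_pow _ _ _
  have hstep2 : ((p:ℝ)+1)^k * M^k ≤ ((p:ℝ)+1)^k * ((c * 2^(k-1))^p) :=
    mul_le_mul_of_nonneg_left hcoef (by positivity)
  have hlt2 : ((p:ℝ)+1)^k * c^p < 2^p := by
    have h1 : ((p:ℝ)+1)^k * (c^p / 2^p) < 1 := by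
      rw [← div_pow]; exact hkey
    have h2 : (0:ℝ) < 2^p := by positivity
    calc ((p:ℝ)+1)^k * c^p = (((p:ℝ)+1)^k * (c^p / 2^p)) * 2^p := by field_simp
      _ < 1 * 2^p := mul_lt_mul_of_pos_right h1 h2
      _ = 2^p := one_mul _
  have hpow2 : ((2:ℝ)^(k-1))^p * 2^p = ((2:ℝ)^p)^k := by
    rw [← pow_mul, ← pow_mul, ← pow_add]
    congr 1
    rw [Nat.sub_mul, one_mul, Nat.sub_add_cancel (Nat.le_mul_of_pos_left p hk), mul_comm]
  have hfinal : ((2:ℝ)^p)^k < ((2:ℝ)^p)^k := by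
    calc ((2:ℝ)^p)^k ≤ ((p:ℝ)+1)^k * (c * 2^(k-1))^p := le_trans hstep1 hstep2
      _ = (((p:ℝ)+1)^k * c^p) * ((2:ℝ)^(k-1))^p := by rw [mul_pow]; ring
      _ < 2^p * ((2:ℝ)^(k-1))^p := mul_lt_mul_of_pos_right hlt2 (by positivity)
      _ = ((2:ℝ)^p)^k := by rw [mul_comm]; exact hpow2
  exact lt_irrefl _ hfinal

end Stmt17Aux

/-- If `α_1, …, α_k` are irrational reals such that `1, α_1, …, α_k` are
linearly independent over ℚ and `a' = (α_1, …, α_k) ∈ ℝ^k`, then for every `ε > 0` there are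
`j ∈ ℕ` and `λ ∈ ℤ^k` with `‖(2j+1)·a' + λ‖ < ε`: some odd multiple of `a'` is ε-close to `0`
modulo ℤ^k. -/
theorem stmt_17 {k : ℕ} (α : Fin k → ℝ) (hirr : ∀ i, Irrational (α i))
    (hind : ∀ (c₀ : ℚ) (c : Fin k → ℚ),
      (c₀ : ℝ) + ∑ i, (c i : ℝ) * α i = 0 → c₀ = 0 ∧ ∀ i, c i = 0)
    (a' : EuclideanSpace ℝ (Fin k)) (ha' : ∀ i, a' i = α i) :
    ∀ ε : ℝ, 0 < ε → ∃ (j : ℕ) (lam : EuclideanSpace ℝ (Fin k)),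
      (∀ i, ∃ z : ℤ, lam i = z) ∧ ‖(2 * (j : ℝ) + 1) • a' + lam‖ < ε := by
  intro ε hε
  set ε' : ℝ := min (ε / (k+1)) (1/4) with hε'def
  have hε'0 : 0 < ε' := lt_min (by positivity) (by norm_num)
  have hε'le : ε' ≤ 1/4 := min_le_right _ _
  have hε'le2 : ε' ≤ ε / (k+1) := min_le_left _ _
  have hβ : ∀ (d : Fin k → ℤ), (∃ n : ℤ, ∑ i, (d i : ℝ) * (2 * α i) = n) →
      ∀ i, d i = 0 := by
    rintro d ⟨n, hn⟩ i
    have hside : ((-n : ℚ) : ℝ) + ∑ i, ((2 * d i : ℚ) : ℝ) * α i = 0 := by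
      push_cast
      have h1 : ∑ i, (2 * (d i : ℝ)) * α i = ∑ i, (d i : ℝ) * (2 * α i) :=
        Finset.sum_congr rfl fun i _ => by ring
      rw [h1, hn]; ring
    have h2 := (hind (-n) (fun i => 2 * d i) hside).2 i
    have h3 : (d i : ℚ) = 0 := by linarith [h2]
    exact_mod_cast h3
  obtain ⟨t, ht⟩ := Stmt17Aux.kron (fun i => 2 * α i) (fun i => -α i) hβ hε'0 hε'le
  choose zf hzf using ht
  set lam : EuclideanSpace ℝ (Fin k) := WithLp.toLp 2 (fun i => ((-zf i : ℤ) : ℝ)) with hlam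
  refine ⟨t, lam, fun i => ⟨-zf i, rfl⟩, ?_⟩
  have hco : ∀ i, |(2 * (t:ℝ) + 1) * α i - zf i| < ε' := by
    intro i
    have := hzf i
    have he : (t:ℝ) * (2 * α i) - (-α i) - zf i = (2 * (t:ℝ) + 1) * α i - zf i := by ring
    rwa [he] at this
  have hnorm : ‖(2 * (t : ℝ) + 1) • a' + lam‖ ≤ Real.sqrt k * ε' := by
    rw [EuclideanSpace.norm_eq]
    have hb : ∀ i ∈ (Finset.univ : Finset (Fin k)),
        ‖((2 * (t : ℝ) + 1) • a' + lam) i‖ ^ 2 ≤ ε' ^ 2 := by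
      intro i _
      have happ : ((2 * (t : ℝ) + 1) • a' + lam) i
          = (2 * (t:ℝ) + 1) * α i - zf i := by
        rw [PiLp.add_apply, PiLp.smul_apply, smul_eq_mul, ha', hlam]
        push_cast; ring
      rw [happ, Real.norm_eq_abs, sq_abs]
      have h4 := hco i
      nlinarith [abs_nonneg ((2 * (t:ℝ) + 1) * α i - zf i),
        le_abs_self ((2 * (t:ℝ) + 1) * α i - zf i),
        neg_abs_le ((2 * (t:ℝ) + 1) * α i - zf i)]
    have hsum : ∑ i, ‖((2 * (t : ℝ) + 1) • a' + lam) i‖ ^ 2 ≤ (k : ℝ) * ε' ^ 2 := by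
      calc _ ≤ ∑ _i : Fin k, ε' ^ 2 := Finset.sum_le_sum hb
        _ = (k : ℝ) * ε' ^ 2 := by
            rw [Finset.sum_const, Finset.card_univ, Fintype.card_fin, nsmul_eq_mul]
    calc Real.sqrt _ ≤ Real.sqrt ((k : ℝ) * ε' ^ 2) := Real.sqrt_le_sqrt hsum
      _ = Real.sqrt k * ε' := by
          rw [Real.sqrt_mul (by positivity), Real.sqrt_sq hε'0.le]
  refine lt_of_le_of_lt hnorm ?_
  have hsk : Real.sqrt k < (k : ℝ) + 1 := by
    have h1 : Real.sqrt k < Real.sqrt (((k:ℝ)+1)^2) := by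
      apply Real.sqrt_lt_sqrt (by positivity)
      nlinarith [Nat.cast_nonneg (α := ℝ) k]
    rwa [Real.sqrt_sq (by positivity)] at h1
  calc Real.sqrt k * ε' < ((k:ℝ)+1) * ε' := mul_lt_mul_of_pos_right hsk hε'0
    _ ≤ ((k:ℝ)+1) * (ε / (k+1)) := mul_le_mul_of_nonneg_left hε'le2 (by positivity)
    _ = ε := by field_simp
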